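/- Let (w_i, x̂_i), i = 1,…,n, be an edge cloud (weights w_i > 0, unit vectors x̂_i ∈ S^{d−1}), and suppose μ ∈ ℝ^d is a geometric median of the edge cloud which is not equal to any x̂_i. Then the polygon gmc(x) with edge vectors w_i (x̂_i − μ)/‖x̂_i − μ‖ is closed, i.e. ∑_i w_i (x̂_i − μ)/‖x̂_i − μ‖ = 0, and has the same edgelengths w_i. Moreover gmc(x) does not depend on the choice of such a geometric median μ. -/

import Mathlib

open Finset

lemma aux_closed {d n : ℕ} (w : Fin n → ℝ) (hw : ∀ i, 0 < w i)
    (hW : (0:ℝ) < ∑ j, w j)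
    (x : Fin n → EuclideanSpace ℝ (Fin d)) (μ : EuclideanSpace ℝ (Fin d))
    (hmed : IsMinOn (fun y : EuclideanSpace ℝ (Fin d) =>
      ∑ i, (w i / ∑ j, w j) * ‖x i - y‖) Set.univ μ)
    (hμ : ∀ i, μ ≠ x i) :
    ∑ i, (w i / ‖x i - μ‖) • (x i - μ) = 0 := by
  let E := EuclideanSpace ℝ (Fin d)
  set W : ℝ := ∑ j, w j with hWdef
  have hne : ∀ i, x i - μ ≠ 0 := fun i => sub_ne_zero.mpr (fun h => hμ i h.symm)
  have hnorm : ∀ i, (0:ℝ) < ‖x i - μ‖ := fun i => norm_pos_iff.mpr (hne i)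
  -- derivative of each term
  have hderiv : ∀ i : Fin n, HasFDerivAt (fun y : E => (w i / W) * ‖x i - y‖)
      (innerSL ℝ (((w i / W) * ‖x i - μ‖⁻¹) • (μ - x i))) μ := by
    intro i
    have h0 : HasFDerivAt (fun y : E => x i - y)
        ((0 : E →L[ℝ] E) - ContinuousLinearMap.id ℝ E) μ :=
      (hasFDerivAt_const (x i) μ).sub (hasFDerivAt_id μ)
    have h1 := h0.norm_sq
    have hne2 : ‖x i - μ‖ ^ 2 ≠ 0 := pow_ne_zero 2 (hnorm i).ne'
    have h2 := h1.sqrt hne2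
    have h3 : HasFDerivAt (fun y : E => ‖x i - y‖)
        ((1 / (2 * Real.sqrt (‖x i - μ‖ ^ 2))) •
          (2 • (innerSL ℝ (x i - μ)).comp ((0 : E →L[ℝ] E) - ContinuousLinearMap.id ℝ E))) μ := by
      simpa only [Real.sqrt_sq (norm_nonneg _)] using h2
    have h4 := h3.const_mul (w i / W)
    have heq : ((w i / W) • (1 / (2 * Real.sqrt (‖x i - μ‖ ^ 2))) •
          (2 • (innerSL ℝ (x i - μ)).comp
            ((0 : EuclideanSpace ℝ (Fin d) →L[ℝ] EuclideanSpace ℝ (Fin d)) -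
              ContinuousLinearMap.id ℝ (EuclideanSpace ℝ (Fin d)))))
        = innerSL ℝ (((w i / W) * ‖x i - μ‖⁻¹) • (μ - x i)) := by
      ext v
      simp only [ContinuousLinearMap.coe_smul', Pi.smul_apply, ContinuousLinearMap.smul_apply,
        ContinuousLinearMap.coe_comp', Function.comp_apply, ContinuousLinearMap.coe_sub',
        Pi.sub_apply, ContinuousLinearMap.zero_apply, ContinuousLinearMap.coe_id', id_eq,
        innerSL_apply_apply, ContinuousLinearMap.neg_apply, zero_sub, Real.sqrt_sq (norm_nonneg _), smul_eq_mul,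
        inner_neg_right, nsmul_eq_mul, Nat.cast_ofNat]
      rw [real_inner_smul_left, inner_sub_left, inner_sub_left]
      field_simp
      ring
    rw [← heq]
    exact h4
  have hsum := HasFDerivAt.fun_sum (fun i (_ : i ∈ Finset.univ) => hderiv i)
  set u : E := ∑ i, ((w i / W) * ‖x i - μ‖⁻¹) • (μ - x i) with hu
  have hsum' : HasFDerivAt (fun y : E => ∑ i, (w i / W) * ‖x i - y‖) (innerSL ℝ u) μ := by
    have := map_sum (innerSL ℝ (E := EuclideanSpace ℝ (Fin d))) (fun i => ((w i / W) * ‖x i - μ‖⁻¹) • (μ - x i))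
      Finset.univ
    rw [hu, this]
    exact hsum
  have hF0 : innerSL ℝ u = 0 :=
    (hmed.isLocalMin Filter.univ_mem).hasFDerivAt_eq_zero hsum'
  have hu0 : u = 0 := by
    have : (inner ℝ u u : ℝ) = 0 := by
      have := congrFun (congrArg (fun f : E →L[ℝ] ℝ => (f : E → ℝ)) hF0) u
      simpa using this
    exact inner_self_eq_zero.mp this
  calc ∑ i, (w i / ‖x i - μ‖) • (x i - μ)
      = ∑ i, (-W) • (((w i / W) * ‖x i - μ‖⁻¹) • (μ - x i)) := by
        refine Finset.sum_congr rfl fun i _ => ?_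
        rw [smul_smul, show μ - x i = -(x i - μ) from (neg_sub _ _).symm, smul_neg, ← neg_smul]
        congr 1
        field_simp
    _ = (-W) • u := (Finset.smul_sum).symm
    _ = 0 := by rw [hu0, smul_zero]


lemma aux_dir {d n : ℕ} (w : Fin n → ℝ) (hw : ∀ i, 0 < w i)
    (hW : (0:ℝ) < ∑ j, w j)
    (x : Fin n → EuclideanSpace ℝ (Fin d)) (μ μ' : EuclideanSpace ℝ (Fin d))
    (hmed : IsMinOn (fun y : EuclideanSpace ℝ (Fin d) =>
      ∑ i, (w i / ∑ j, w j) * ‖x i - y‖) Set.univ μ)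
    (hmed' : IsMinOn (fun y : EuclideanSpace ℝ (Fin d) =>
      ∑ i, (w i / ∑ j, w j) * ‖x i - y‖) Set.univ μ')
    (hμ : ∀ i, μ ≠ x i) (hμ' : ∀ i, μ' ≠ x i) (i : Fin n) :
    ‖x i - μ‖⁻¹ • (x i - μ) = ‖x i - μ'‖⁻¹ • (x i - μ') := by
  set W : ℝ := ∑ j, w j with hWdef
  set f : EuclideanSpace ℝ (Fin d) → ℝ := fun y => ∑ i, (w i / W) * ‖x i - y‖ with hf
  have hne : ∀ j, x j - μ ≠ 0 := fun j => sub_ne_zero.mpr (fun h => hμ j h.symm)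
  have hne' : ∀ j, x j - μ' ≠ 0 := fun j => sub_ne_zero.mpr (fun h => hμ' j h.symm)
  have hfeq : f μ = f μ' :=
    le_antisymm (hmed (Set.mem_univ μ')) (hmed' (Set.mem_univ μ))
  set m : EuclideanSpace ℝ (Fin d) := midpoint ℝ μ μ' with hm
  -- pointwise bound at the midpoint
  have hterm : ∀ j, ‖x j - m‖ ≤ (‖x j - μ‖ + ‖x j - μ'‖) / 2 := by
    intro j
    have h1 : x j - m = (2:ℝ)⁻¹ • ((x j - μ) + (x j - μ')) := by
      rw [hm, midpoint_eq_smul_add, invOf_eq_inv]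
      module
    calc ‖x j - m‖ = (2:ℝ)⁻¹ * ‖(x j - μ) + (x j - μ')‖ := by
          rw [h1, norm_smul]; norm_num
      _ ≤ (2:ℝ)⁻¹ * (‖x j - μ‖ + ‖x j - μ'‖) := by
          gcongr; exact norm_add_le _ _
      _ = (‖x j - μ‖ + ‖x j - μ'‖) / 2 := by ring
  have hsum_le : f m ≤ (f μ + f μ') / 2 := by
    rw [hf]
    simp only
    rw [← Finset.sum_add_distrib, Finset.sum_div]
    apply Finset.sum_le_sum
    intro j _
    rw [show (w j / W * ‖x j - μ‖ + w j / W * ‖x j - μ'‖) / 2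
        = w j / W * ((‖x j - μ‖ + ‖x j - μ'‖) / 2) by ring]
    exact mul_le_mul_of_nonneg_left (hterm j) (div_nonneg (hw j).le hW.le)
  have hsum_ge : f μ ≤ f m := hmed (Set.mem_univ m)
  have hfm : f m = (f μ + f μ') / 2 := by
    have : (f μ + f μ') / 2 = f μ := by rw [← hfeq]; ring
    linarith
  -- each term attains equality
  have heqterm : ∀ j ∈ Finset.univ, (w j / W) * ‖x j - m‖
      = (w j / W) * ((‖x j - μ‖ + ‖x j - μ'‖) / 2) := by
    have hle : ∀ j ∈ Finset.univ, (w j / W) * ‖x j - m‖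
        ≤ (w j / W) * ((‖x j - μ‖ + ‖x j - μ'‖) / 2) := fun j _ =>
      mul_le_mul_of_nonneg_left (hterm j) (div_nonneg (hw j).le hW.le)
    have hsums : ∑ j, (w j / W) * ‖x j - m‖
        = ∑ j, (w j / W) * ((‖x j - μ‖ + ‖x j - μ'‖) / 2) := by
      have h1 : ∑ j, (w j / W) * ((‖x j - μ‖ + ‖x j - μ'‖) / 2) = (f μ + f μ') / 2 := by
        rw [hf]
        simp only
        rw [← Finset.sum_add_distrib, Finset.sum_div]
        apply Finset.sum_congr rfl
        intro j _
        ring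
      rw [h1, ← hfm]
    exact (Finset.sum_eq_sum_iff_of_le hle).mp hsums
  have hj := heqterm i (Finset.mem_univ i)
  have hwpos : 0 < w i / W := div_pos (hw i) hW
  have hnm : ‖x i - m‖ = (‖x i - μ‖ + ‖x i - μ'‖) / 2 := by
    exact mul_left_cancel₀ hwpos.ne' hj
  -- equality in the triangle inequality
  have hadd : ‖(x i - μ) + (x i - μ')‖ = ‖x i - μ‖ + ‖x i - μ'‖ := by
    have h1 : x i - m = (2:ℝ)⁻¹ • ((x i - μ) + (x i - μ')) := by
      rw [hm, midpoint_eq_smul_add, invOf_eq_inv]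
      module
    have h2 : ‖x i - m‖ = (2:ℝ)⁻¹ * ‖(x i - μ) + (x i - μ')‖ := by
      rw [h1, norm_smul]
      simp
    rw [h2] at hnm
    linarith
  have hray : SameRay ℝ (x i - μ) (x i - μ') := sameRay_iff_norm_add.mpr hadd
  exact hray.inv_norm_smul_eq (hne i) (hne' i)

/-- If `μ` is a geometric median of the edge cloud `(w_i, x̂_i)` (a minimizer of
`y ↦ ∑ ω_i ‖x̂_i - y‖` with `ω_i = w_i/∑ w_j`) which is not one of the `x̂_i`, then the
geometric median closure, with edge vectors `w_i (x̂_i - μ)/‖x̂_i - μ‖`, is closed, has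
edgelengths `w_i`, and does not depend on the choice of such a geometric median. -/
theorem stmt2 (d n : ℕ) (w : Fin n → ℝ) (hw : ∀ i, 0 < w i)
    (x : Fin n → EuclideanSpace ℝ (Fin d)) (hx : ∀ i, ‖x i‖ = 1)
    (μ : EuclideanSpace ℝ (Fin d))
    (hmed : IsMinOn (fun y : EuclideanSpace ℝ (Fin d) =>
      ∑ i, (w i / ∑ j, w j) * ‖x i - y‖) Set.univ μ)
    (hμ : ∀ i, μ ≠ x i) :
    (∑ i, (w i / ‖x i - μ‖) • (x i - μ) = 0) ∧
    (∀ i, ‖(w i / ‖x i - μ‖) • (x i - μ)‖ = w i) ∧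
    (∀ μ' : EuclideanSpace ℝ (Fin d),
      IsMinOn (fun y : EuclideanSpace ℝ (Fin d) =>
        ∑ i, (w i / ∑ j, w j) * ‖x i - y‖) Set.univ μ' →
      (∀ i, μ' ≠ x i) →
      ∀ i, (w i / ‖x i - μ‖) • (x i - μ) = (w i / ‖x i - μ'‖) • (x i - μ')) := by
  rcases Nat.eq_zero_or_pos n with hn | hn
  · subst hn
    exact ⟨by simp, fun i => i.elim0, fun μ' _ _ i => i.elim0⟩
  have : Nonempty (Fin n) := Fin.pos_iff_nonempty.mp hn
  have hW : (0:ℝ) < ∑ j, w j := Finset.sum_pos (fun i _ => hw i) Finset.univ_nonempty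
  refine ⟨aux_closed w hw hW x μ hmed hμ, fun i => ?_, fun μ' hmed' hμ' i => ?_⟩
  · have hpos : 0 < ‖x i - μ‖ := norm_pos_iff.mpr (sub_ne_zero.mpr fun h => hμ i h.symm)
    rw [norm_smul, Real.norm_eq_abs, abs_of_pos (div_pos (hw i) hpos),
      div_mul_cancel₀ _ hpos.ne']
  · have hd := aux_dir w hw hW x μ μ' hmed hmed' hμ hμ' i
    rw [div_eq_mul_inv, div_eq_mul_inv, mul_smul, mul_smul, hd]
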